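/- For the copycat event structure CC_A on a game A, the relation generated by the causal dependency of A⊥ ∥ A together with the extra pairs c̄ ≤ c for every positive event c of A⊥ ∥ A is a partial order, and every principal down-set in this order is finite. -/
import Mathlib


structure EventStructure (E : Type) where
  le : E → E → Prop
  conflict : E → E → Prop
  le_refl : ∀ e, le e e
  le_trans : ∀ {a b c}, le a b → le b c → le a c
  le_antisymm : ∀ {a b}, le a b → le b a → a = b
  finite_causes : ∀ e, {e' | le e' e}.Finite
  conflict_irrefl : ∀ e, ¬ conflict e e
  conflict_symm : ∀ {a b}, conflict a b → conflict b a
  conflict_le : ∀ {a b c}, conflict a b → le b c → conflict a c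

/-- A configuration: consistent and down-closed subset of events. -/
def IsConfig {E : Type} (ES : EventStructure E) (x : Set E) : Prop :=
  (∀ e ∈ x, ∀ e' ∈ x, ¬ ES.conflict e e') ∧
  (∀ e ∈ x, ∀ e', ES.le e' e → e' ∈ x)

/-- A total map of event structures: sends configurations to configurations
and is injective on each configuration. -/
def IsMapES {E E' : Type} (ES : EventStructure E) (ES' : EventStructure E')
    (f : E → E') : Prop :=
  (∀ x, IsConfig ES x → IsConfig ES' (f '' x)) ∧
  (∀ x, IsConfig ES x → ∀ e ∈ x, ∀ e' ∈ x, f e = f e' → e = e')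

/-- A rigid map: preserves causal dependency. -/
def RigidMap {E E' : Type} (ES : EventStructure E) (ES' : EventStructure E')
    (f : E → E') : Prop :=
  ∀ a b, ES.le a b → ES'.le (f a) (f b)

/-- An open map: rigid, with configuration-lifting of extensions. -/
def OpenMapES {E E' : Type} (ES : EventStructure E) (ES' : EventStructure E')
    (f : E → E') : Prop :=
  RigidMap ES ES' f ∧
  ∀ x y, IsConfig ES x → IsConfig ES' y → f '' x ⊆ y →
    ∃ z, IsConfig ES z ∧ x ⊆ z ∧ f '' z = y

/-- Polarity on `A⊥ ∥ A`: reversed on the left component. -/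
def ccPol {E : Type} (pol : E → Bool) : E ⊕ E → Bool
  | .inl e => !pol e
  | .inr e => pol e

/-- The corresponding event in the other component. -/
def ccBar {E : Type} : E ⊕ E → E ⊕ E
  | .inl e => .inr e
  | .inr e => .inl e

/-- Causal dependency of the juxtaposition `A⊥ ∥ A`. -/
def parLE {E : Type} (ES : EventStructure E) : E ⊕ E → E ⊕ E → Prop
  | .inl a, .inl b => ES.le a b
  | .inr a, .inr b => ES.le a b
  | _, _ => False

/-- Conflict of the juxtaposition `A⊥ ∥ A`: only within components. -/
def parConflict {E : Type} (ES : EventStructure E) : E ⊕ E → E ⊕ E → Prop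
  | .inl a, .inl b => ES.conflict a b
  | .inr a, .inr b => ES.conflict a b
  | _, _ => False

/-- Causal dependency of the copycat event structure: generated by that of
`A⊥ ∥ A` together with `c̄ ≤ c` for every positive `c`. -/
def ccLE {E : Type} (ES : EventStructure E) (pol : E → Bool) : E ⊕ E → E ⊕ E → Prop :=
  Relation.ReflTransGen
    (fun x y => parLE ES x y ∨ (ccPol pol y = true ∧ x = ccBar y))


private def ccProj {E : Type} : E ⊕ E → E
  | .inl e => e
  | .inr e => e

private lemma ccProj_bar {E : Type} (c : E ⊕ E) : ccProj (ccBar c) = ccProj c := by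
  cases c <;> rfl

private lemma ccLE_mono {E : Type} (ES : EventStructure E) (pol : E → Bool)
    {x y : E ⊕ E} (h : ccLE ES pol x y) : ES.le (ccProj x) (ccProj y) := by
  induction h with
  | refl => exact ES.le_refl _
  | tail _ step ih =>
    rcases step with hp | ⟨_, hb⟩
    · rename_i b c _
      cases b <;> cases c <;> simp [parLE] at hp <;>
        exact ES.le_trans ih hp
    · subst hb; rw [ccProj_bar] at ih; exact ih

private lemma ccLE_key {E : Type} (ES : EventStructure E) (pol : E → Bool)
    {x y : E ⊕ E} (h : ccLE ES pol x y) :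
    ES.le (ccProj y) (ccProj x) →
      x = y ∨ (∃ a, x = .inl a ∧ y = .inr a ∧ pol a = true)
            ∨ (∃ a, x = .inr a ∧ y = .inl a ∧ pol a = false) := by
  induction h using Relation.ReflTransGen.head_induction_on with
  | refl => intro _; exact Or.inl rfl
  | head step h ih =>
    rename_i x z
    intro hle
    have hxz : ES.le (ccProj x) (ccProj z) := by
      rcases step with hp | ⟨_, hb⟩
      · cases x <;> cases z <;> simp [parLE] at hp <;> exact hp
      · subst hb; rw [ccProj_bar]; exact ES.le_refl _
    have hzy : ES.le (ccProj z) (ccProj y) := ccLE_mono ES pol h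
    have hxy : ccProj x = ccProj y := ES.le_antisymm (ES.le_trans hxz hzy) hle
    have hxz' : ccProj x = ccProj z := ES.le_antisymm hxz (ES.le_trans hzy (hxy ▸ hle))
    have ih' := ih (by rw [← hxz', hxy]; exact ES.le_refl _)
    rcases step with hp | ⟨hpos, hb⟩
    · -- same side step, so x = z
      have hx : x = z := by
        cases x <;> cases z <;> simp [parLE] at hp <;> simp_all [ccProj]
      rw [hx]; exact ih'
    · subst hb
      cases z with
      | inl a =>
        simp only [ccBar, ccPol] at *
        have hpa : pol a = false := by simpa using hpos
        rcases ih' with h1 | ⟨b, hb1, hb2, hb3⟩ | ⟨b, hb1, hb2, hb3⟩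
        · subst h1; exact Or.inr (Or.inr ⟨a, rfl, rfl, hpa⟩)
        · simp_all
        · simp at hb1
      | inr a =>
        simp only [ccBar, ccPol] at *
        have hpa : pol a = true := hpos
        rcases ih' with h1 | ⟨b, hb1, hb2, hb3⟩ | ⟨b, hb1, hb2, hb3⟩
        · subst h1; exact Or.inr (Or.inl ⟨a, rfl, rfl, hpa⟩)
        · simp at hb1
        · simp_all

theorem copycat_order_is_partial_order_with_finite_causes
    {E : Type} (ES : EventStructure E) (pol : E → Bool) :
    (∀ a b : E ⊕ E, ccLE ES pol a b → ccLE ES pol b a → a = b) ∧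
    (∀ e : E ⊕ E, Set.Finite {e' | ccLE ES pol e' e}) := by
  constructor
  · intro a b hab hba
    have h1 := ccLE_key ES pol hab (ccLE_mono ES pol hba)
    have h2 := ccLE_key ES pol hba (ccLE_mono ES pol hab)
    rcases h1 with h1 | ⟨c, hc1, hc2, hc3⟩ | ⟨c, hc1, hc2, hc3⟩
    · exact h1
    · rcases h2 with h2 | ⟨d, hd1, hd2, hd3⟩ | ⟨d, hd1, hd2, hd3⟩
      · exact h2.symm
      · rw [hc2] at hd1; cases hd1
      · rw [hc1] at hd2; rw [hc2] at hd1
        cases hd1; cases hd2; rw [hc3] at hd3; cases hd3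
    · rcases h2 with h2 | ⟨d, hd1, hd2, hd3⟩ | ⟨d, hd1, hd2, hd3⟩
      · exact h2.symm
      · rw [hc1] at hd2; rw [hc2] at hd1
        cases hd1; cases hd2; rw [hc3] at hd3; cases hd3
      · rw [hc2] at hd1; cases hd1
  · intro e
    have hfin : ({a | ES.le a (ccProj e)}).Finite := ES.finite_causes _
    apply Set.Finite.subset ((hfin.image Sum.inl).union (hfin.image Sum.inr))
    intro e' he'
    have hle : ES.le (ccProj e') (ccProj e) := ccLE_mono ES pol he'
    cases e' with
    | inl a => exact Or.inl ⟨a, hle, rfl⟩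
    | inr a => exact Or.inr ⟨a, hle, rfl⟩
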